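/- Let $H = (V_1 \cup V_2 \cup V_3, E)$ be a tripartite $3$-uniform hypergraph, and let $\mathcal{P}$ be a partition of $V_1$ which is almost $\epsilon$-good with respect to $H$. If $\mathcal{Q}$ is a partition of $V_1$ refining $\mathcal{P}$, then $\mathcal{Q}$ is almost $\epsilon^{1/4}$-good with respect to $H$ (in particular, almost $\sqrt{\epsilon}$-good). -/

import Mathlib

open scoped Classical
open Finset

/-- `X ⊆ V₁` is almost `δ`-good with respect to the tripartite 3-graph with
parts `V₁,V₂,V₃` and edge predicate `E`: for at least `(1-δ)|V₂||V₃|` pairs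
`(y,z) ∈ V₂ × V₃` one has `|N_H(yz) ∩ X|/|X| ∈ [0,δ) ∪ (1-δ,1]`. -/
def AlmostGood {α : Type*} [DecidableEq α] (E : α → α → α → Prop)
    (V2 V3 : Finset α) (δ : ℝ) (X : Finset α) : Prop :=
  (1 - δ) * ((V2.card : ℝ) * (V3.card : ℝ)) ≤
    (((V2 ×ˢ V3).filter fun p =>
      ((X.filter fun x => E x p.1 p.2).card : ℝ) / (X.card : ℝ) < δ ∨
      1 - δ < ((X.filter fun x => E x p.1 p.2).card : ℝ) / (X.card : ℝ)).card : ℝ)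

lemma aux_sum_card_le {α β : Type*} [DecidableEq α] (S : Finset β) (f : β → Finset α)
    (hdisj : ∀ x ∈ S, ∀ y ∈ S, x ≠ y → Disjoint (f x) (f y))
    (W : Finset α) (hsub : ∀ Y ∈ S, f Y ⊆ W) :
    ∑ Y ∈ S, ((f Y).card : ℝ) ≤ (W.card : ℝ) := by
  have h1 : (S.biUnion f).card = ∑ Y ∈ S, (f Y).card := Finset.card_biUnion hdisj
  have h2 : (S.biUnion f).card ≤ W.card :=
    Finset.card_le_card (Finset.biUnion_subset.mpr hsub)
  rw [h1] at h2
  exact_mod_cast h2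

/-- per good pair bound -/
lemma aux_pair_bound {α : Type*} [DecidableEq α] (E : α → α → α → Prop)
    (ε δ : ℝ) (hδ0 : 0 < δ)
    (X : Finset α) (hX : X.Nonempty) (S : Finset (Finset α))
    (hdisj : ∀ Y ∈ S, ∀ Z ∈ S, Y ≠ Z → Disjoint Y Z)
    (hsub : ∀ Y ∈ S, Y ⊆ X) (hne : ∀ Y ∈ S, Y.Nonempty)
    (p : α × α)
    (hp : ((X.filter fun x => E x p.1 p.2).card : ℝ) / (X.card : ℝ) < ε ∨
      1 - ε < ((X.filter fun x => E x p.1 p.2).card : ℝ) / (X.card : ℝ)) :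
    ∑ Y ∈ S.filter (fun Y =>
        ¬ (((Y.filter fun x => E x p.1 p.2).card : ℝ) / (Y.card : ℝ) < δ ∨
          1 - δ < ((Y.filter fun x => E x p.1 p.2).card : ℝ) / (Y.card : ℝ))),
      (Y.card : ℝ) ≤ (ε / δ) * (X.card : ℝ) := by
  set T := S.filter (fun Y =>
        ¬ (((Y.filter fun x => E x p.1 p.2).card : ℝ) / (Y.card : ℝ) < δ ∨
          1 - δ < ((Y.filter fun x => E x p.1 p.2).card : ℝ) / (Y.card : ℝ))) with hT
  have hXpos : (0:ℝ) < X.card := by exact_mod_cast Finset.card_pos.mpr hX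
  rw [div_mul_eq_mul_div, le_div_iff₀ hδ0]
  have hTsub : ∀ Y ∈ T, Y ∈ S := fun Y hY => Finset.mem_of_mem_filter Y hY
  rcases hp with hp | hp
  · -- sparse case
    have hNX : ((X.filter fun x => E x p.1 p.2).card : ℝ) ≤ ε * X.card := by
      rw [div_lt_iff₀ hXpos] at hp; linarith
    have hterm : ∀ Y ∈ T, δ * (Y.card : ℝ) ≤ ((Y.filter fun x => E x p.1 p.2).card : ℝ) := by
      intro Y hY
      have hYmem := Finset.mem_filter.mp hY
      push_neg at hYmem
      have hd := hYmem.2.1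
      have hYpos : (0:ℝ) < Y.card := by
        exact_mod_cast Finset.card_pos.mpr (hne Y hYmem.1)
      rw [le_div_iff₀ hYpos] at hd
      linarith
    have hsumN : ∑ Y ∈ T, ((Y.filter fun x => E x p.1 p.2).card : ℝ)
        ≤ ((X.filter fun x => E x p.1 p.2).card : ℝ) := by
      apply aux_sum_card_le
      · intro x hx y hy hxy
        exact Finset.disjoint_filter_filter (hdisj x (hTsub x hx) y (hTsub y hy) hxy)
      · intro Y hY
        exact Finset.filter_subset_filter _ (hsub Y (hTsub Y hY))
    calc (∑ Y ∈ T, (Y.card : ℝ)) * δ = ∑ Y ∈ T, δ * (Y.card : ℝ) := by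
          rw [Finset.sum_mul]; exact Finset.sum_congr rfl fun _ _ => mul_comm _ _
      _ ≤ ∑ Y ∈ T, ((Y.filter fun x => E x p.1 p.2).card : ℝ) := Finset.sum_le_sum hterm
      _ ≤ _ := hsumN
      _ ≤ ε * X.card := hNX
  · -- dense case
    have hNX : ((X.filter fun x => ¬ E x p.1 p.2).card : ℝ) ≤ ε * X.card := by
      rw [lt_div_iff₀ hXpos] at hp
      have h0 := Finset.card_filter_add_card_filter_not
        (s := X) (p := fun x => E x p.1 p.2)
      have h2 : ((X.filter fun x => E x p.1 p.2).card : ℝ)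
          + ((X.filter fun x => ¬ E x p.1 p.2).card : ℝ) = (X.card : ℝ) := by
        exact_mod_cast h0
      nlinarith
    have hterm : ∀ Y ∈ T, δ * (Y.card : ℝ) ≤ ((Y.filter fun x => ¬ E x p.1 p.2).card : ℝ) := by
      intro Y hY
      have hYmem := Finset.mem_filter.mp hY
      push_neg at hYmem
      have hd := hYmem.2.2
      have hYpos : (0:ℝ) < Y.card := by
        exact_mod_cast Finset.card_pos.mpr (hne Y hYmem.1)
      rw [div_le_iff₀ hYpos] at hd
      have h0 := Finset.card_filter_add_card_filter_not
        (s := Y) (p := fun x => E x p.1 p.2)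
      have h2 : ((Y.filter fun x => E x p.1 p.2).card : ℝ)
          + ((Y.filter fun x => ¬ E x p.1 p.2).card : ℝ) = (Y.card : ℝ) := by
        exact_mod_cast h0
      nlinarith
    have hsumN : ∑ Y ∈ T, ((Y.filter fun x => ¬ E x p.1 p.2).card : ℝ)
        ≤ ((X.filter fun x => ¬ E x p.1 p.2).card : ℝ) := by
      apply aux_sum_card_le
      · intro x hx y hy hxy
        exact Finset.disjoint_filter_filter (hdisj x (hTsub x hx) y (hTsub y hy) hxy)
      · intro Y hY
        exact Finset.filter_subset_filter _ (hsub Y (hTsub Y hY))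
    calc (∑ Y ∈ T, (Y.card : ℝ)) * δ = ∑ Y ∈ T, δ * (Y.card : ℝ) := by
          rw [Finset.sum_mul]; exact Finset.sum_congr rfl fun _ _ => mul_comm _ _
      _ ≤ ∑ Y ∈ T, ((Y.filter fun x => ¬ E x p.1 p.2).card : ℝ) := Finset.sum_le_sum hterm
      _ ≤ _ := hsumN
      _ ≤ ε * X.card := hNX

set_option maxHeartbeats 1000000 in
/-- key per-part bound -/
lemma aux_key_bound {α : Type*} [DecidableEq α] (E : α → α → α → Prop)
    (V2 V3 : Finset α) (ε δ : ℝ) (hε0 : 0 < ε) (hδ0 : 0 < δ)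
    (hM : (0:ℝ) < (V2.card : ℝ) * (V3.card : ℝ))
    (X : Finset α) (hX : X.Nonempty) (hXg : AlmostGood E V2 V3 ε X)
    (S : Finset (Finset α))
    (hdisj : ∀ Y ∈ S, ∀ Z ∈ S, Y ≠ Z → Disjoint Y Z)
    (hsub : ∀ Y ∈ S, Y ⊆ X) (hne : ∀ Y ∈ S, Y.Nonempty)
    (hbad : ∀ Y ∈ S, ¬ AlmostGood E V2 V3 δ Y) :
    ∑ Y ∈ S, (Y.card : ℝ) ≤ (ε / δ + ε / δ ^ 2) * (X.card : ℝ) := by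
  unfold AlmostGood at hXg hbad
  set M : ℝ := (V2.card : ℝ) * (V3.card : ℝ) with hMdef
  have hMcard : (((V2 ×ˢ V3).card : ℝ)) = M := by
    rw [Finset.card_product]; push_cast; rfl
  -- Step 1: each bad Y has many bad pairs
  have h1 : ∀ Y ∈ S, δ * M ≤ (((V2 ×ˢ V3).filter (fun p =>
      ¬ (((Y.filter fun x => E x p.1 p.2).card : ℝ) / (Y.card : ℝ) < δ ∨
        1 - δ < ((Y.filter fun x => E x p.1 p.2).card : ℝ) / (Y.card : ℝ)))).card : ℝ) := by
    intro Y hY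
    have hb := hbad Y hY
    push_neg at hb
    have hsplit := Finset.card_filter_add_card_filter_not (s := V2 ×ˢ V3)
      (p := fun p => ((Y.filter fun x => E x p.1 p.2).card : ℝ) / (Y.card : ℝ) < δ ∨
        1 - δ < ((Y.filter fun x => E x p.1 p.2).card : ℝ) / (Y.card : ℝ))
    have hsplit' : (((V2 ×ˢ V3).filter (fun p =>
        ((Y.filter fun x => E x p.1 p.2).card : ℝ) / (Y.card : ℝ) < δ ∨
        1 - δ < ((Y.filter fun x => E x p.1 p.2).card : ℝ) / (Y.card : ℝ))).card : ℝ)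
        + (((V2 ×ˢ V3).filter (fun p =>
        ¬ (((Y.filter fun x => E x p.1 p.2).card : ℝ) / (Y.card : ℝ) < δ ∨
        1 - δ < ((Y.filter fun x => E x p.1 p.2).card : ℝ) / (Y.card : ℝ)))).card : ℝ)
        = M := by
      rw [← hMcard]; exact_mod_cast hsplit
    linarith
  -- Step 2
  have h2 : δ * M * (∑ Y ∈ S, (Y.card : ℝ)) ≤
      ∑ Y ∈ S, (Y.card : ℝ) * (((V2 ×ˢ V3).filter (fun p =>
      ¬ (((Y.filter fun x => E x p.1 p.2).card : ℝ) / (Y.card : ℝ) < δ ∨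
        1 - δ < ((Y.filter fun x => E x p.1 p.2).card : ℝ) / (Y.card : ℝ)))).card : ℝ) := by
    rw [Finset.mul_sum]
    refine Finset.sum_le_sum fun Y hY => ?_
    have h := h1 Y hY
    have hc : (0:ℝ) ≤ (Y.card : ℝ) := Nat.cast_nonneg _
    calc δ * M * (Y.card : ℝ) = (Y.card : ℝ) * (δ * M) := by ring
      _ ≤ _ := mul_le_mul_of_nonneg_left h hc
  -- Step 3: swap sums
  have h3 : ∑ Y ∈ S, (Y.card : ℝ) * (((V2 ×ˢ V3).filter (fun p =>
      ¬ (((Y.filter fun x => E x p.1 p.2).card : ℝ) / (Y.card : ℝ) < δ ∨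
        1 - δ < ((Y.filter fun x => E x p.1 p.2).card : ℝ) / (Y.card : ℝ)))).card : ℝ)
      = ∑ p ∈ V2 ×ˢ V3, ∑ Y ∈ S.filter (fun Y =>
      ¬ (((Y.filter fun x => E x p.1 p.2).card : ℝ) / (Y.card : ℝ) < δ ∨
        1 - δ < ((Y.filter fun x => E x p.1 p.2).card : ℝ) / (Y.card : ℝ))), (Y.card : ℝ) := by
    calc ∑ Y ∈ S, (Y.card : ℝ) * (((V2 ×ˢ V3).filter (fun p =>
      ¬ (((Y.filter fun x => E x p.1 p.2).card : ℝ) / (Y.card : ℝ) < δ ∨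
        1 - δ < ((Y.filter fun x => E x p.1 p.2).card : ℝ) / (Y.card : ℝ)))).card : ℝ)
        = ∑ Y ∈ S, ∑ p ∈ V2 ×ˢ V3, (if
      ¬ (((Y.filter fun x => E x p.1 p.2).card : ℝ) / (Y.card : ℝ) < δ ∨
        1 - δ < ((Y.filter fun x => E x p.1 p.2).card : ℝ) / (Y.card : ℝ))
          then (Y.card : ℝ) else 0) := by
          refine Finset.sum_congr rfl fun Y _ => ?_
          rw [Finset.card_filter]
          push_cast
          rw [Finset.mul_sum]
          exact Finset.sum_congr rfl fun p _ => by split <;> simp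
      _ = ∑ p ∈ V2 ×ˢ V3, ∑ Y ∈ S, (if
      ¬ (((Y.filter fun x => E x p.1 p.2).card : ℝ) / (Y.card : ℝ) < δ ∨
        1 - δ < ((Y.filter fun x => E x p.1 p.2).card : ℝ) / (Y.card : ℝ))
          then (Y.card : ℝ) else 0) := Finset.sum_comm
      _ = _ := Finset.sum_congr rfl fun p _ => (Finset.sum_filter _ _).symm
  -- Step 4
  have hXc : (0:ℝ) ≤ (X.card : ℝ) := Nat.cast_nonneg _
  have h4 : ∑ p ∈ V2 ×ˢ V3, ∑ Y ∈ S.filter (fun Y =>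
      ¬ (((Y.filter fun x => E x p.1 p.2).card : ℝ) / (Y.card : ℝ) < δ ∨
        1 - δ < ((Y.filter fun x => E x p.1 p.2).card : ℝ) / (Y.card : ℝ))), (Y.card : ℝ)
      ≤ ε * M * (X.card : ℝ) + M * ((ε / δ) * (X.card : ℝ)) := by
    rw [← Finset.sum_filter_add_sum_filter_not (V2 ×ˢ V3) (fun p =>
      ((X.filter fun x => E x p.1 p.2).card : ℝ) / (X.card : ℝ) < ε ∨
      1 - ε < ((X.filter fun x => E x p.1 p.2).card : ℝ) / (X.card : ℝ))]
    have hgpsum : ∑ p ∈ (V2 ×ˢ V3).filter (fun p =>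
      ((X.filter fun x => E x p.1 p.2).card : ℝ) / (X.card : ℝ) < ε ∨
      1 - ε < ((X.filter fun x => E x p.1 p.2).card : ℝ) / (X.card : ℝ)),
        ∑ Y ∈ S.filter (fun Y =>
      ¬ (((Y.filter fun x => E x p.1 p.2).card : ℝ) / (Y.card : ℝ) < δ ∨
        1 - δ < ((Y.filter fun x => E x p.1 p.2).card : ℝ) / (Y.card : ℝ))), (Y.card : ℝ)
        ≤ M * ((ε / δ) * (X.card : ℝ)) := by
      have hb : ∀ p ∈ (V2 ×ˢ V3).filter (fun p =>
      ((X.filter fun x => E x p.1 p.2).card : ℝ) / (X.card : ℝ) < ε ∨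
      1 - ε < ((X.filter fun x => E x p.1 p.2).card : ℝ) / (X.card : ℝ)),
          ∑ Y ∈ S.filter (fun Y =>
      ¬ (((Y.filter fun x => E x p.1 p.2).card : ℝ) / (Y.card : ℝ) < δ ∨
        1 - δ < ((Y.filter fun x => E x p.1 p.2).card : ℝ) / (Y.card : ℝ))), (Y.card : ℝ)
          ≤ (ε / δ) * (X.card : ℝ) := by
        intro p hp
        exact aux_pair_bound E ε δ hδ0 X hX S hdisj hsub hne p (Finset.mem_filter.mp hp).2
      calc _ ≤ ∑ _p ∈ (V2 ×ˢ V3).filter (fun p =>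
      ((X.filter fun x => E x p.1 p.2).card : ℝ) / (X.card : ℝ) < ε ∨
      1 - ε < ((X.filter fun x => E x p.1 p.2).card : ℝ) / (X.card : ℝ)),
            (ε / δ) * (X.card : ℝ) := Finset.sum_le_sum hb
        _ = (((V2 ×ˢ V3).filter (fun p =>
      ((X.filter fun x => E x p.1 p.2).card : ℝ) / (X.card : ℝ) < ε ∨
      1 - ε < ((X.filter fun x => E x p.1 p.2).card : ℝ) / (X.card : ℝ))).card : ℝ)
            * ((ε / δ) * (X.card : ℝ)) := by rw [Finset.sum_const, nsmul_eq_mul]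
        _ ≤ M * ((ε / δ) * (X.card : ℝ)) := by
            apply mul_le_mul_of_nonneg_right
            · rw [← hMcard]
              exact_mod_cast Finset.card_le_card (Finset.filter_subset _ _)
            · positivity
    have hbpsum : ∑ p ∈ (V2 ×ˢ V3).filter (fun p => ¬ (
      ((X.filter fun x => E x p.1 p.2).card : ℝ) / (X.card : ℝ) < ε ∨
      1 - ε < ((X.filter fun x => E x p.1 p.2).card : ℝ) / (X.card : ℝ))),
        ∑ Y ∈ S.filter (fun Y =>
      ¬ (((Y.filter fun x => E x p.1 p.2).card : ℝ) / (Y.card : ℝ) < δ ∨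
        1 - δ < ((Y.filter fun x => E x p.1 p.2).card : ℝ) / (Y.card : ℝ))), (Y.card : ℝ)
        ≤ ε * M * (X.card : ℝ) := by
      have hb : ∀ p ∈ (V2 ×ˢ V3).filter (fun p => ¬ (
      ((X.filter fun x => E x p.1 p.2).card : ℝ) / (X.card : ℝ) < ε ∨
      1 - ε < ((X.filter fun x => E x p.1 p.2).card : ℝ) / (X.card : ℝ))),
          ∑ Y ∈ S.filter (fun Y =>
      ¬ (((Y.filter fun x => E x p.1 p.2).card : ℝ) / (Y.card : ℝ) < δ ∨
        1 - δ < ((Y.filter fun x => E x p.1 p.2).card : ℝ) / (Y.card : ℝ))), (Y.card : ℝ)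
          ≤ (X.card : ℝ) := by
        intro p _
        apply aux_sum_card_le (f := id)
        · intro x hx y hy hxy
          exact hdisj x (Finset.mem_of_mem_filter x hx) y (Finset.mem_of_mem_filter y hy) hxy
        · intro Y hY
          exact hsub Y (Finset.mem_of_mem_filter Y hY)
      have hcard : (((V2 ×ˢ V3).filter (fun p => ¬ (
      ((X.filter fun x => E x p.1 p.2).card : ℝ) / (X.card : ℝ) < ε ∨
      1 - ε < ((X.filter fun x => E x p.1 p.2).card : ℝ) / (X.card : ℝ)))).card : ℝ)
          ≤ ε * M := by
        have hsplit := Finset.card_filter_add_card_filter_not (s := V2 ×ˢ V3)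
          (p := fun p => ((X.filter fun x => E x p.1 p.2).card : ℝ) / (X.card : ℝ) < ε ∨
            1 - ε < ((X.filter fun x => E x p.1 p.2).card : ℝ) / (X.card : ℝ))
        have hsplit' : (((V2 ×ˢ V3).filter (fun p =>
            ((X.filter fun x => E x p.1 p.2).card : ℝ) / (X.card : ℝ) < ε ∨
            1 - ε < ((X.filter fun x => E x p.1 p.2).card : ℝ) / (X.card : ℝ))).card : ℝ)
            + (((V2 ×ˢ V3).filter (fun p =>
            ¬ (((X.filter fun x => E x p.1 p.2).card : ℝ) / (X.card : ℝ) < ε ∨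
            1 - ε < ((X.filter fun x => E x p.1 p.2).card : ℝ) / (X.card : ℝ)))).card : ℝ)
            = M := by
          rw [← hMcard]; exact_mod_cast hsplit
        linarith
      calc _ ≤ ∑ _p ∈ (V2 ×ˢ V3).filter (fun p => ¬ (
      ((X.filter fun x => E x p.1 p.2).card : ℝ) / (X.card : ℝ) < ε ∨
      1 - ε < ((X.filter fun x => E x p.1 p.2).card : ℝ) / (X.card : ℝ))),
            (X.card : ℝ) := Finset.sum_le_sum hb
        _ = _ * (X.card : ℝ) := by rw [Finset.sum_const, nsmul_eq_mul]
        _ ≤ ε * M * (X.card : ℝ) := mul_le_mul_of_nonneg_right hcard hXc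
    linarith
  have hδM : (0:ℝ) < δ * M := by positivity
  have hfin : δ * M * (∑ Y ∈ S, (Y.card : ℝ)) ≤
      δ * M * ((ε / δ + ε / δ ^ 2) * (X.card : ℝ)) := by
    have heq : δ * M * ((ε / δ + ε / δ ^ 2) * (X.card : ℝ)) =
        ε * M * (X.card : ℝ) + M * ((ε / δ) * (X.card : ℝ)) := by
      field_simp
    rw [heq]
    calc δ * M * (∑ Y ∈ S, (Y.card : ℝ)) ≤ _ := h2
      _ = _ := h3
      _ ≤ _ := h4
  exact le_of_mul_le_mul_left hfin hδM


set_option maxHeartbeats 1000000 in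
/-- Lemma 4.6: if `𝒫` is an almost `ε`-good partition of `V₁`
with respect to a tripartite 3-graph `H`, then any refinement `𝒬` of `𝒫` is an
almost `ε^(1/4)`-good partition of `V₁` (in particular almost `√ε`-good). -/
theorem stmt_5 {α : Type*} [DecidableEq α] (ε : ℝ) (hε0 : 0 < ε) (hε1 : ε < 1)
    (V1 V2 V3 : Finset α)
    (h12 : Disjoint V1 V2) (h13 : Disjoint V1 V3) (h23 : Disjoint V2 V3)
    (E : α → α → α → Prop)
    (P Q : Finset (Finset α))
    (hPdisj : (P : Set (Finset α)).PairwiseDisjoint id)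
    (hPcover : P.biUnion id = V1) (hPne : ∀ X ∈ P, X.Nonempty)
    (hQdisj : (Q : Set (Finset α)).PairwiseDisjoint id)
    (hQcover : Q.biUnion id = V1) (hQne : ∀ X ∈ Q, X.Nonempty)
    (hrefine : ∀ Y ∈ Q, ∃ X ∈ P, Y ⊆ X)
    (hgood : (1 - ε) * (V1.card : ℝ) ≤
      (((P.filter (AlmostGood E V2 V3 ε)).biUnion id).card : ℝ)) :
    (1 - ε ^ ((1:ℝ)/4)) * (V1.card : ℝ) ≤
      (((Q.filter (AlmostGood E V2 V3 (ε ^ ((1:ℝ)/4)))).biUnion id).card : ℝ) := by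
  set δ : ℝ := ε ^ ((1:ℝ)/4) with hδdef
  have hδ0 : 0 < δ := Real.rpow_pos_of_pos hε0 _
  have hεδ : ε = δ ^ (4:ℕ) := by
    rw [hδdef, ← Real.rpow_natCast (ε ^ ((1:ℝ)/4)) 4, ← Real.rpow_mul hε0.le]
    norm_num
  have hV1 : (0:ℝ) ≤ (V1.card : ℝ) := Nat.cast_nonneg _
  -- helper facts for trivial cases
  have hgoodM0 : (V2.card : ℝ) * (V3.card : ℝ) = 0 → ∀ Z, AlmostGood E V2 V3 δ Z := by
    intro h0 Z
    unfold AlmostGood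
    rw [h0, mul_zero]
    exact Nat.cast_nonneg _
  have hgoodhalf : 1/2 < δ → ∀ Z, AlmostGood E V2 V3 δ Z := by
    intro hhalf Z
    unfold AlmostGood
    have hfull : (V2 ×ˢ V3).filter (fun p =>
        ((Z.filter fun x => E x p.1 p.2).card : ℝ) / (Z.card : ℝ) < δ ∨
        1 - δ < ((Z.filter fun x => E x p.1 p.2).card : ℝ) / (Z.card : ℝ)) = V2 ×ˢ V3 := by
      apply Finset.filter_true_of_mem
      intro p _
      by_cases hd : ((Z.filter fun x => E x p.1 p.2).card : ℝ) / (Z.card : ℝ) < δ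
      · exact Or.inl hd
      · push_neg at hd
        exact Or.inr (by linarith)
    rw [hfull, Finset.card_product]
    push_cast
    have hm : (0:ℝ) ≤ (V2.card : ℝ) * (V3.card : ℝ) := by exact mul_nonneg (Nat.cast_nonneg _) (Nat.cast_nonneg _)
    nlinarith
  by_cases htriv : ∀ Y ∈ Q, AlmostGood E V2 V3 δ Y
  · rw [Finset.filter_true_of_mem htriv, hQcover]
    nlinarith
  · -- nontrivial case
    have hM : (0:ℝ) < (V2.card : ℝ) * (V3.card : ℝ) := by
      rcases eq_or_lt_of_le (show (0:ℝ) ≤ (V2.card : ℝ) * (V3.card : ℝ) by exact mul_nonneg (Nat.cast_nonneg _) (Nat.cast_nonneg _)) with h0 | h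
      · exact absurd (fun Y _ => hgoodM0 h0.symm Y) htriv
      · exact h
    have hhalf : δ ≤ 1/2 := by
      by_contra hh
      push_neg at hh
      exact htriv (fun Y _ => hgoodhalf hh Y)
    have hεδle : 0 < ε := hε0
    set Pg := P.filter (AlmostGood E V2 V3 ε) with hPgdef
    set U := Pg.biUnion id with hUdef
    have hPgP : ∀ X ∈ Pg, X ∈ P := fun X hX => Finset.mem_of_mem_filter X hX
    have hUsub : U ⊆ V1 := by
      rw [hUdef]
      apply Finset.biUnion_subset.mpr
      intro X hX
      rw [← hPcover]
      exact Finset.subset_biUnion_of_mem id (hPgP X hX)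
    have hQdisj' : ∀ x ∈ Q, ∀ y ∈ Q, x ≠ y → Disjoint (id x) (id y) :=
      fun x hx y hy h => hQdisj hx hy h
    have hV1sum : (V1.card : ℝ) = ∑ Y ∈ Q, (Y.card : ℝ) := by
      rw [← hQcover, Finset.card_biUnion hQdisj', Nat.cast_sum]
      rfl
    have hgoodsum : (((Q.filter (AlmostGood E V2 V3 δ)).biUnion id).card : ℝ)
        = ∑ Y ∈ Q.filter (AlmostGood E V2 V3 δ), (Y.card : ℝ) := by
      rw [Finset.card_biUnion (fun x hx y hy h =>
        hQdisj' x (Finset.mem_of_mem_filter x hx) y (Finset.mem_of_mem_filter y hy) h),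
        Nat.cast_sum]
      rfl
    set B := Q.filter (fun Y => ¬ AlmostGood E V2 V3 δ Y) with hBdef
    have hsplitQ : ∑ Y ∈ Q, (Y.card : ℝ)
        = ∑ Y ∈ Q.filter (AlmostGood E V2 V3 δ), (Y.card : ℝ) + ∑ Y ∈ B, (Y.card : ℝ) :=
      (Finset.sum_filter_add_sum_filter_not Q _ _).symm
    -- properties of members of B
    have hBQ : ∀ Y ∈ B, Y ∈ Q := fun Y hY => Finset.mem_of_mem_filter Y hY
    suffices hB : ∑ Y ∈ B, (Y.card : ℝ) ≤ δ * (V1.card : ℝ) by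
      rw [hgoodsum]
      have := hV1sum
      nlinarith [hsplitQ]
    set B1 := B.filter (fun Y => ∃ X ∈ Pg, Y ⊆ X) with hB1def
    set B2 := B.filter (fun Y => ¬ ∃ X ∈ Pg, Y ⊆ X) with hB2def
    have hsplitB : ∑ Y ∈ B, (Y.card : ℝ)
        = ∑ Y ∈ B1, (Y.card : ℝ) + ∑ Y ∈ B2, (Y.card : ℝ) :=
      (Finset.sum_filter_add_sum_filter_not B _ _).symm
    -- bound on B2
    have hB2 : ∑ Y ∈ B2, (Y.card : ℝ) ≤ ε * (V1.card : ℝ) := by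
      have hsub2 : ∀ Y ∈ B2, Y ⊆ V1 \ U := by
        intro Y hY
        have hYmem := Finset.mem_filter.mp hY
        have hYQ : Y ∈ Q := hBQ Y hYmem.1
        intro a ha
        rw [Finset.mem_sdiff]
        constructor
        · rw [← hQcover]
          exact Finset.mem_biUnion.mpr ⟨Y, hYQ, ha⟩
        · intro haU
          rw [hUdef] at haU
          obtain ⟨X', hX', haX'⟩ := Finset.mem_biUnion.mp haU
          obtain ⟨X, hXP, hYX⟩ := hrefine Y hYQ
          have hXX' : X = X' := by
            by_contra hne'
            exact Finset.disjoint_left.mp (hPdisj hXP (hPgP X' hX') hne') (hYX ha) haX'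
          exact hYmem.2 ⟨X', hX', hXX' ▸ hYX⟩
      have hle : ∑ Y ∈ B2, (Y.card : ℝ) ≤ ((V1 \ U).card : ℝ) := by
        apply aux_sum_card_le (f := id)
        · intro x hx y hy h
          exact hQdisj' x (hBQ x (Finset.mem_of_mem_filter x hx)) y
            (hBQ y (Finset.mem_of_mem_filter y hy)) h
        · exact hsub2
      have hcards : ((V1 \ U).card : ℝ) = (V1.card : ℝ) - (U.card : ℝ) := by
        rw [Finset.card_sdiff_of_subset hUsub]
        have := Finset.card_le_card hUsub
        push_cast [this]
        ring
      rw [hcards] at hle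
      have hUbig : (1 - ε) * (V1.card : ℝ) ≤ (U.card : ℝ) := hgood
      nlinarith
    -- bound on B1
    have hB1 : ∑ Y ∈ B1, (Y.card : ℝ) ≤ (ε / δ + ε / δ ^ 2) * (V1.card : ℝ) := by
      have hB1eq : B1 = Pg.biUnion (fun X => B1.filter (fun Y => Y ⊆ X)) := by
        ext Y
        simp only [Finset.mem_biUnion, Finset.mem_filter]
        constructor
        · intro hY
          have hYm := Finset.mem_filter.mp hY
          obtain ⟨X, hXPg, hYX⟩ := hYm.2
          exact ⟨X, hXPg, hY, hYX⟩
        · rintro ⟨X, hX, hYB1, hYX⟩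
          exact hYB1
      have hgrpdisj : Set.PairwiseDisjoint (↑Pg) (fun X => B1.filter (fun Y => Y ⊆ X)) := by
        intro X hX X' hX' hne'
        rw [Function.onFun]
        apply Finset.disjoint_left.mpr
        intro Y hY hY'
        have hYX := (Finset.mem_filter.mp hY).2
        have hYX' := (Finset.mem_filter.mp hY').2
        have hYB1 := (Finset.mem_filter.mp hY).1
        have hYQ : Y ∈ Q := hBQ Y (Finset.mem_of_mem_filter Y hYB1)
        obtain ⟨a, ha⟩ := hQne Y hYQ
        exact Finset.disjoint_left.mp (hPdisj (hPgP X hX) (hPgP X' hX') hne') (hYX ha) (hYX' ha)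
      have hstep : ∑ Y ∈ B1, (Y.card : ℝ)
          = ∑ X ∈ Pg, ∑ Y ∈ B1.filter (fun Y => Y ⊆ X), (Y.card : ℝ) := by
        conv_lhs => rw [hB1eq]
        exact Finset.sum_biUnion hgrpdisj
      rw [hstep]
      have hperX : ∀ X ∈ Pg, ∑ Y ∈ B1.filter (fun Y => Y ⊆ X), (Y.card : ℝ)
          ≤ (ε / δ + ε / δ ^ 2) * (X.card : ℝ) := by
        intro X hX
        have hXP : X ∈ P := hPgP X hX
        have hXg : AlmostGood E V2 V3 ε X := (Finset.mem_filter.mp hX).2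
        apply aux_key_bound E V2 V3 ε δ hε0 hδ0 hM X (hPne X hXP) hXg
        · intro x hx y hy h
          exact hQdisj' x (hBQ x (Finset.mem_of_mem_filter x (Finset.mem_of_mem_filter x hx)))
            y (hBQ y (Finset.mem_of_mem_filter y (Finset.mem_of_mem_filter y hy))) h
        · intro Y hY
          exact (Finset.mem_filter.mp hY).2
        · intro Y hY
          exact hQne Y (hBQ Y (Finset.mem_of_mem_filter Y (Finset.mem_of_mem_filter Y hY)))
        · intro Y hY
          have hYB : Y ∈ B := Finset.mem_of_mem_filter Y (Finset.mem_of_mem_filter Y hY)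
          exact (Finset.mem_filter.mp hYB).2
      have hPgsum : ∑ X ∈ Pg, (X.card : ℝ) ≤ (V1.card : ℝ) := by
        apply aux_sum_card_le (f := id)
        · intro x hx y hy h
          exact hPdisj (hPgP x hx) (hPgP y hy) h
        · intro X hX
          rw [← hPcover]
          exact Finset.subset_biUnion_of_mem id (hPgP X hX)
      calc ∑ X ∈ Pg, ∑ Y ∈ B1.filter (fun Y => Y ⊆ X), (Y.card : ℝ)
          ≤ ∑ X ∈ Pg, (ε / δ + ε / δ ^ 2) * (X.card : ℝ) := Finset.sum_le_sum hperX
        _ = (ε / δ + ε / δ ^ 2) * ∑ X ∈ Pg, (X.card : ℝ) := by rw [Finset.mul_sum]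
        _ ≤ (ε / δ + ε / δ ^ 2) * (V1.card : ℝ) := by
            apply mul_le_mul_of_nonneg_left hPgsum
            positivity
    -- final numeric computation
    have hd1 : ε / δ = δ ^ 3 := by
      rw [hεδ]
      field_simp
    have hd2 : ε / δ ^ 2 = δ ^ 2 := by
      rw [hεδ]
      field_simp
    have hcoef : ε + (ε / δ + ε / δ ^ 2) ≤ δ := by
      rw [hd1, hd2, hεδ]
      nlinarith [hδ0, hhalf, sq_nonneg δ, pow_pos hδ0 2, pow_pos hδ0 3]
    have : ∑ Y ∈ B, (Y.card : ℝ) ≤ (ε + (ε / δ + ε / δ ^ 2)) * (V1.card : ℝ) := by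
      rw [hsplitB]
      nlinarith
    calc ∑ Y ∈ B, (Y.card : ℝ) ≤ (ε + (ε / δ + ε / δ ^ 2)) * (V1.card : ℝ) := this
      _ ≤ δ * (V1.card : ℝ) := mul_le_mul_of_nonneg_right hcoef hV1
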